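/- For the free nonholonomic particle (U ≡ 0) with equations ẋ = p_x/√(1+y²), ẏ = √(1+y²)p_y, ṗ_x = 0, ṗ_y = −y p_y²/√(1+y²), along any solution with p_y(0) ≠ 0 the quantity (1+y(t)²) tends to infinity as t → ∞; equivalently the conformal factor N(y(t)) = 1/√(1+y(t)²) tends to 0. -/

import Mathlib

open Filter Real

lemma sqrt_tendsto_atTop : Filter.Tendsto Real.sqrt Filter.atTop Filter.atTop := by
  apply Filter.tendsto_atTop_atTop.2
  intro b
  refine ⟨b ^ 2, fun a ha => ?_⟩
  nlinarith [Real.sq_sqrt (le_trans (sq_nonneg b) ha), Real.sqrt_nonneg a]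

/-- For the free nonholonomic particle (`U ≡ 0`), along any solution with
`p_y(0) ≠ 0` the quantity `1 + y(t)²` tends to infinity as `t → ∞`;
equivalently the conformal factor `N(y(t)) = 1/√(1 + y(t)²)` tends to `0`. -/
theorem free_nonholonomic_particle_conformal_factor_vanishes
    (x y px py : ℝ → ℝ)
    (hx : Differentiable ℝ x) (hy : Differentiable ℝ y)
    (hpx : Differentiable ℝ px) (hpy : Differentiable ℝ py)
    (h1 : ∀ t, deriv x t = px t / Real.sqrt (1 + y t ^ 2))
    (h2 : ∀ t, deriv y t = Real.sqrt (1 + y t ^ 2) * py t)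
    (h3 : ∀ t, deriv px t = 0)
    (h4 : ∀ t, deriv py t = -(y t * py t ^ 2) / Real.sqrt (1 + y t ^ 2))
    (h0 : py 0 ≠ 0) :
    Filter.Tendsto (fun t => 1 + y t ^ 2) Filter.atTop Filter.atTop ∧
    Filter.Tendsto (fun t => 1 / Real.sqrt (1 + y t ^ 2))
      Filter.atTop (nhds 0) := by
  set s : ℝ → ℝ := fun t => Real.sqrt (1 + y t ^ 2) with hs_def
  have hpos : ∀ t, (0:ℝ) < 1 + y t ^ 2 := fun t => by positivity
  have hspos : ∀ t, 0 < s t := fun t => Real.sqrt_pos.2 (hpos t)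
  have hsne : ∀ t, s t ≠ 0 := fun t => (hspos t).ne'
  have hssq : ∀ t, s t * s t = 1 + y t ^ 2 := fun t =>
    Real.mul_self_sqrt (hpos t).le
  -- s has derivative y * y' / s
  have hsd : ∀ t, HasDerivAt s (y t * deriv y t / s t) t := by
    intro t
    have h1' : HasDerivAt (fun t => 1 + y t ^ 2)
        (2 * y t ^ 1 * deriv y t) t := by
      simpa using (HasDerivAt.const_add 1 (((hy t).hasDerivAt).pow 2))
    have := h1'.sqrt (hpos t).ne'
    convert this using 1
    rw [hs_def]
    field_simp
  -- u = s * py has zero derivative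
  set u : ℝ → ℝ := fun t => s t * py t with hu_def
  have hud : ∀ t, HasDerivAt u 0 t := by
    intro t
    have := (hsd t).mul ((hpy t).hasDerivAt)
    refine this.congr_deriv ?_
    rw [h2, h4]
    field_simp
    simp only [hs_def]
    ring
  have hu_diff : Differentiable ℝ u := fun t => (hud t).differentiableAt
  have hu_deriv : ∀ t, deriv u t = 0 := fun t => (hud t).deriv
  have hu_const : ∀ t, u t = u 0 := fun t =>
    is_const_of_deriv_eq_zero hu_diff hu_deriv t 0
  have hu0 : u 0 ≠ 0 := mul_ne_zero (hsne 0) h0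
  -- y t = y 0 + u 0 * t
  have hyd : ∀ t, deriv y t = u 0 := by
    intro t; rw [h2 t, ← hu_const t]
  have hg : ∀ t, y t = y 0 + u 0 * t := by
    intro t
    have hgdiff : Differentiable ℝ (fun t => y t - u 0 * t) :=
      hy.sub (differentiable_id.const_mul _)
    have hgd : ∀ t, deriv (fun t => y t - u 0 * t) t = 0 := by
      intro t
      have hd : HasDerivAt (fun t => y t - u 0 * t) (deriv y t - u 0 * 1) t :=
        (hy t).hasDerivAt.sub ((hasDerivAt_id t).const_mul (u 0))
      rw [hd.deriv, hyd t]; ring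
    have := is_const_of_deriv_eq_zero hgdiff hgd t 0
    simp at this
    linarith
  -- y² → ∞
  have habs : Tendsto (fun t => y t ^ 2) atTop atTop := by
    have key : Tendsto (fun t : ℝ => (y 0 + u 0 * t) ^ 2) atTop atTop := by
      rcases lt_or_gt_of_ne hu0 with hneg | hposu
      · have hlin : Tendsto (fun t : ℝ => -(y 0 + u 0 * t)) atTop atTop := by
          have h := tendsto_atTop_add_const_left atTop (-(y 0))
            (Filter.Tendsto.const_mul_atTop (r := -u 0) (by linarith)
              (tendsto_id (α := ℝ)))
          refine h.congr fun t => ?_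
          simp only [id]; ring
        have h := (tendsto_pow_atTop (n := 2) two_ne_zero).comp hlin
        refine h.congr fun t => ?_
        simp only [Function.comp]
        ring
      · have hlin : Tendsto (fun t : ℝ => y 0 + u 0 * t) atTop atTop := by
          have h := tendsto_atTop_add_const_left atTop (y 0)
            (Filter.Tendsto.const_mul_atTop hposu (tendsto_id (α := ℝ)))
          refine h.congr fun t => ?_
          simp only [id]
        exact (tendsto_pow_atTop (n := 2) two_ne_zero).comp hlin
    have : (fun t => y t ^ 2) = fun t : ℝ => (y 0 + u 0 * t) ^ 2 := by
      funext t; rw [hg t]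
    rw [this]; exact key
  have h1y : Tendsto (fun t => 1 + y t ^ 2) atTop atTop :=
    tendsto_atTop_add_const_left _ 1 habs
  refine ⟨h1y, ?_⟩
  have hsT : Tendsto s atTop atTop := sqrt_tendsto_atTop.comp h1y
  simp only [one_div]; exact (hsT.inv_tendsto_atTop : Tendsto (fun t => (s t)⁻¹) atTop (nhds 0))
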